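/- Let U₀ ≠ 0, σ > 0, c ∈ ℝ, κ = √6, and U(φ) = U₀·((φ−c)² − σ²)². For every φ with (φ−c)² > σ², setting λ(φ) = −(√6/κ)·U′(φ)/U(φ) and Γ(φ) = U″(φ)U(φ)/U′(φ)², one has λ(φ) = −4(φ−c)/((φ−c)² − σ²) and Γ(φ) = 3/4 − σ²/(4(φ−c)²) = 3/4 − σ²λ(φ)²/(4·(2 + √(4 + σ²λ(φ)²))²). -/

import Mathlib

lemma higgs_hasDerivAt (U₀ σ c x : ℝ) :
    HasDerivAt (fun φ => U₀*((φ - c)^2 - σ^2)^2)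
      (4*U₀*(x-c)*((x-c)^2-σ^2)) x := by
  have h1 : HasDerivAt (fun φ : ℝ => φ - c) 1 x := (hasDerivAt_id x).sub_const c
  have h2 := ((h1.fun_pow 2).sub_const (σ^2)).fun_pow 2
  have h3 := h2.const_mul U₀
  refine h3.congr_deriv ?_; norm_num; ring

lemma higgs_hasDerivAt2 (U₀ σ c x : ℝ) :
    HasDerivAt (fun φ => 4*U₀*(φ-c)*((φ-c)^2-σ^2))
      (4*U₀*(3*(x-c)^2-σ^2)) x := by
  have h1 : HasDerivAt (fun φ : ℝ => φ - c) 1 x := (hasDerivAt_id x).sub_const c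
  have h2 := ((h1.const_mul (4*U₀)).fun_mul ((h1.fun_pow 2).sub_const (σ^2)))
  refine h2.congr_deriv ?_
  push_cast
  ring

/-- For the Higgs potential `U(φ) = U₀((φ−c)² − σ²)²` with `κ = √6`,
on the region `(φ−c)² > σ²` one has `λ(φ) = −4(φ−c)/((φ−c)² − σ²)` and
`Γ(φ) = 3/4 − σ²/(4(φ−c)²) = 3/4 − σ²λ²/(4(2 + √(4+σ²λ²))²)`. -/
theorem higgs_potential_Gamma (U₀ σ c : ℝ) (hU₀ : U₀ ≠ 0) (hσ : 0 < σ) :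
    let κ : ℝ := Real.sqrt 6
    let U : ℝ → ℝ := fun φ => U₀*((φ - c)^2 - σ^2)^2
    let lam : ℝ → ℝ := fun φ => -(Real.sqrt 6 / κ) * deriv U φ / U φ
    let Γ : ℝ → ℝ := fun φ => deriv (deriv U) φ * U φ / (deriv U φ)^2
    ∀ φ : ℝ, σ^2 < (φ - c)^2 →
      lam φ = -4*(φ - c)/((φ - c)^2 - σ^2) ∧
      Γ φ = 3/4 - σ^2/(4*(φ - c)^2) ∧
      Γ φ = 3/4 - σ^2*(lam φ)^2/(4*(2 + Real.sqrt (4 + σ^2*(lam φ)^2))^2) := by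
  intro κ U lam Γ φ hφ
  have hdU : deriv U = fun x => 4*U₀*(x-c)*((x-c)^2-σ^2) :=
    funext fun x => (higgs_hasDerivAt U₀ σ c x).deriv
  have hdU2 : deriv (deriv U) φ = 4*U₀*(3*(φ-c)^2-σ^2) := by
    rw [hdU]; exact (higgs_hasDerivAt2 U₀ σ c φ).deriv
  set x := φ - c with hx
  have hx2 : σ^2 < x^2 := hφ
  have hpos : 0 < x^2 - σ^2 := by linarith
  have hne : x^2 - σ^2 ≠ 0 := ne_of_gt hpos
  have hxne : x ≠ 0 := by
    intro h; rw [h] at hx2; nlinarith [sq_nonneg σ]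
  have hκ : κ ≠ 0 := by
    simp only [κ]; positivity
  have hκ6 : Real.sqrt 6 / κ = 1 := div_self hκ
  have hlam : lam φ = -4*x/(x^2-σ^2) := by
    simp only [lam, hdU, hκ6, U, ← hx]
    field_simp
  have hG : Γ φ = 3/4 - σ^2/(4*x^2) := by
    show deriv (deriv U) φ * U φ / (deriv U φ)^2 = _
    rw [hdU2, hdU]
    simp only [U, ← hx]
    field_simp
  refine ⟨hlam, hG, ?_⟩
  rw [hG, hlam]
  have key : 4 + σ^2*(-4*x/(x^2-σ^2))^2 = (2*(x^2+σ^2)/(x^2-σ^2))^2 := by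
    field_simp
    ring
  rw [key, Real.sqrt_sq (by positivity)]
  have h2 : (2 : ℝ) + 2*(x^2+σ^2)/(x^2-σ^2) = 4*x^2/(x^2-σ^2) := by
    field_simp; ring
  rw [h2]
  congr 1
  field_simp
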